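/- (Zonotope collision check.) Let Z₁ = Z(c₁, G₁) ⊂ ℝⁿ and Z₂ = Z(c₂, G₂) ⊂ ℝⁿ be zonotopes. Then Z₁ ∩ Z₂ = ∅ if and only if c₁ ∉ Z(c₂, [G₁, G₂]), where [G₁, G₂] denotes the horizontal concatenation of the generator matrices. -/

import Mathlib

/-- The zonotope with center `c` and generator matrix `G`:
the set `{c + Gβ : ‖β‖_∞ ≤ 1}`. -/
def zonotope {ρ ι : Type*} [Fintype ι] (c : ρ → ℝ) (G : Matrix ρ ι ℝ) :
    Set (ρ → ℝ) :=
  {x | ∃ β : ι → ℝ, (∀ i, |β i| ≤ 1) ∧ x = c + G.mulVec β}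

/-- Zonotope collision check: two zonotopes `Z(c₁,G₁)` and `Z(c₂,G₂)` are
disjoint if and only if `c₁ ∉ Z(c₂, [G₁, G₂])`, where `[G₁, G₂]` is the
horizontal concatenation of the generator matrices. -/
theorem zonotope_collision_check {n m₁ m₂ : ℕ}
    (c₁ c₂ : Fin n → ℝ)
    (G₁ : Matrix (Fin n) (Fin m₁) ℝ) (G₂ : Matrix (Fin n) (Fin m₂) ℝ) :
    zonotope c₁ G₁ ∩ zonotope c₂ G₂ = ∅ ↔
      c₁ ∉ zonotope c₂ (Matrix.fromCols G₁ G₂) := by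
  rw [Set.eq_empty_iff_forall_notMem]
  constructor
  · intro h hc
    obtain ⟨β, hβ, hc⟩ := hc
    apply h (c₁ + G₁.mulVec (-(β ∘ Sum.inl)))
    constructor
    · exact ⟨-(β ∘ Sum.inl), fun i => by simpa using hβ (Sum.inl i), rfl⟩
    · refine ⟨β ∘ Sum.inr, fun i => hβ (Sum.inr i), ?_⟩
      have : β = Sum.elim (β ∘ Sum.inl) (β ∘ Sum.inr) := by
        ext (i | i) <;> rfl
      rw [this, Matrix.fromCols_mulVec_sumElim] at hc
      rw [hc, Matrix.mulVec_neg]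
      abel
  · intro h x ⟨⟨β₁, hβ₁, hx₁⟩, ⟨β₂, hβ₂, hx₂⟩⟩
    apply h
    refine ⟨Sum.elim (-β₁) β₂, ?_, ?_⟩
    · rintro (i | i)
      · simpa using hβ₁ i
      · exact hβ₂ i
    · rw [Matrix.fromCols_mulVec_sumElim, Matrix.mulVec_neg]
      rw [hx₁] at hx₂
      have h2 : c₁ = c₂ + G₂.mulVec β₂ - G₁.mulVec β₁ := by
        rw [← hx₂]; abel
      rw [h2]; abel
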